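/- Let n ≥ 2 be even and s a nonzero real. Then √π · (sn/4 · coth(πsn/4))^{1/2} · ∏_{k=1}^{(n−2)/2} (1 + n²s²/(4(2k)²))^{1/2} ≤ (cosh(πsn/4))^{1/2} ≤ e^{π|s|n/8}. -/

import Mathlib

open Real Finset Filter Topology

theorem sinh_prod_tendsto (x : ℝ) :
    Tendsto (fun N : ℕ => π * x * ∏ j ∈ Finset.range N, ((1 : ℝ) + x ^ 2 / ((j : ℝ) + 1) ^ 2))
      atTop (𝓝 (Real.sinh (π * x))) := by
  have h := (Complex.tendsto_euler_sin_prod (x * Complex.I)).mul_const (-Complex.I)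
  have key : Complex.sin (π * (x * Complex.I)) * -Complex.I = (Real.sinh (π * x) : ℂ) := by
    rw [← mul_assoc, ← Complex.ofReal_mul, Complex.sin_mul_I]
    push_cast
    rw [mul_assoc]
    linear_combination (-(Complex.sinh (π * x))) * Complex.I_sq
  rw [key] at h
  rw [← Filter.tendsto_ofReal_iff]
  convert h using 2 with N
  push_cast
  rw [Finset.prod_congr rfl (fun j _ => by
    rw [mul_pow, Complex.I_sq]
    ring_nf : ∀ j ∈ Finset.range N,
      ((1 : ℂ) - (x * Complex.I) ^ 2 / ((j : ℂ) + 1) ^ 2) = 1 + (x:ℂ) ^ 2 / ((j : ℂ) + 1) ^ 2)]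
  linear_combination ((π : ℂ) * x * ∏ j ∈ Finset.range N,
    ((1:ℂ) + (x:ℂ)^2/((j:ℂ)+1)^2)) * Complex.I_sq

theorem prod_le_sinh_div (x : ℝ) (hx : 0 < x) (M : ℕ) :
    ∏ k ∈ Finset.Icc 1 M, ((1 : ℝ) + x ^ 2 / (k : ℝ) ^ 2) ≤ Real.sinh (π * x) / (π * x) := by
  have hπx : 0 < π * x := mul_pos Real.pi_pos hx
  have h2 : Tendsto (fun N : ℕ => ∏ j ∈ Finset.range N, ((1 : ℝ) + x ^ 2 / ((j : ℝ) + 1) ^ 2))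
      atTop (𝓝 (Real.sinh (π * x) / (π * x))) := by
    have := (sinh_prod_tendsto x).div_const (π * x)
    simpa [mul_div_assoc, mul_div_cancel_left₀ _ hπx.ne'] using this
  have hmono : Monotone (fun N : ℕ => ∏ j ∈ Finset.range N, ((1 : ℝ) + x ^ 2 / ((j : ℝ) + 1) ^ 2)) := by
    intro a b hab
    dsimp only
    rw [← Finset.prod_range_mul_prod_Ico _ hab]
    refine le_mul_of_one_le_right (Finset.prod_nonneg fun j _ => by positivity) ?_
    calc (1:ℝ) = ∏ _j ∈ Finset.Ico a b, 1 := by simp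
    _ ≤ _ := Finset.prod_le_prod (fun j _ => by positivity) (fun j _ => by
        have : (0:ℝ) ≤ x ^ 2 / ((j : ℝ) + 1) ^ 2 := by positivity
        linarith)
  have := hmono.ge_of_tendsto h2 M
  refine le_trans (le_of_eq ?_) this
  rw [← Finset.Ico_add_one_right_eq_Icc,
    ← Nat.Ico_zero_eq_range, Finset.prod_Ico_eq_prod_range, Finset.prod_Ico_eq_prod_range]
  simp [Nat.cast_add]
  exact Finset.prod_congr rfl fun j _ => by ring_nf

theorem sqrt_finset_prod {ι : Type*} (s : Finset ι) (f : ι → ℝ) (h : ∀ i ∈ s, 0 ≤ f i) :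
    ∏ i ∈ s, Real.sqrt (f i) = Real.sqrt (∏ i ∈ s, f i) := by
  induction s using Finset.cons_induction with
  | empty => simp
  | cons a s ha ih =>
    rw [Finset.prod_cons, Finset.prod_cons, ih (fun i hi => h i (Finset.mem_cons_of_mem hi)),
      Real.sqrt_mul (h a (Finset.mem_cons_self a s))]

theorem key_ineq (x : ℝ) (hx : 0 < x) (M : ℕ) :
    π * (x * (Real.cosh (π * x) / Real.sinh (π * x))) *
      ∏ k ∈ Finset.Icc 1 M, ((1 : ℝ) + x ^ 2 / (k : ℝ) ^ 2) ≤ Real.cosh (π * x) := by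
  have hπx : 0 < π * x := mul_pos Real.pi_pos hx
  have hsinh : 0 < Real.sinh (π * x) := Real.sinh_pos_iff.2 hπx
  have hcosh : 0 < Real.cosh (π * x) := Real.cosh_pos _
  have hP := prod_le_sinh_div x hx M
  have hA : 0 < π * (x * (Real.cosh (π * x) / Real.sinh (π * x))) := by positivity
  calc π * (x * (Real.cosh (π * x) / Real.sinh (π * x))) *
        ∏ k ∈ Finset.Icc 1 M, ((1 : ℝ) + x ^ 2 / (k : ℝ) ^ 2)
      ≤ π * (x * (Real.cosh (π * x) / Real.sinh (π * x))) *
        (Real.sinh (π * x) / (π * x)) := by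
        exact mul_le_mul_of_nonneg_left hP hA.le
    _ = Real.cosh (π * x) := by field_simp

theorem cosh_le_exp_abs (y : ℝ) : Real.cosh y ≤ Real.exp |y| := by
  rw [← Real.cosh_abs, Real.cosh_eq]
  have h1 : Real.exp (-|y|) ≤ Real.exp |y| := Real.exp_le_exp.2 (by linarith [abs_nonneg y])
  linarith

/-- For even `n ≥ 2` and `s ≠ 0`,
`√π (sn/4 · coth(πsn/4))^{1/2} ∏_{k=1}^{(n−2)/2} (1 + n²s²/(4(2k)²))^{1/2}
  ≤ (cosh(πsn/4))^{1/2} ≤ e^{π|s|n/8}`. -/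
theorem even_case_product_bound (n : ℕ) (hn : 2 ≤ n) (heven : Even n) (s : ℝ) (hs : s ≠ 0) :
    (Real.sqrt π *
        Real.sqrt (s * n / 4 * (Real.cosh (π * s * n / 4) / Real.sinh (π * s * n / 4))) *
        ∏ k ∈ Finset.Icc 1 ((n - 2) / 2),
          Real.sqrt (1 + (n : ℝ) ^ 2 * s ^ 2 / (4 * (2 * (k : ℝ)) ^ 2)) ≤
      Real.sqrt (Real.cosh (π * s * n / 4))) ∧
    Real.sqrt (Real.cosh (π * s * n / 4)) ≤ Real.exp (π * |s| * n / 8) := by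
  have hn0 : (0:ℝ) < n := by positivity
  set x : ℝ := |s| * n / 4 with hxdef
  have hx : 0 < x := by
    have := abs_pos.2 hs
    positivity
  have harg : π * s * n / 4 = π * (s * n / 4) := by ring
  have hcosh_eq : Real.cosh (π * s * n / 4) = Real.cosh (π * x) := by
    rcases abs_cases s with ⟨h1, _⟩ | ⟨h1, _⟩
    · rw [hxdef, h1]; ring_nf
    · rw [hxdef, h1, ← Real.cosh_neg]
      congr 1; ring
  have hA_eq : s * n / 4 * (Real.cosh (π * s * n / 4) / Real.sinh (π * s * n / 4))
      = x * (Real.cosh (π * x) / Real.sinh (π * x)) := by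
    rcases abs_cases s with ⟨h1, _⟩ | ⟨h1, _⟩
    · rw [hxdef, h1]; ring_nf
    · rw [hxdef, h1, show π * (-s * (n:ℝ) / 4) = -(π * s * n / 4) by ring,
        Real.cosh_neg, Real.sinh_neg]
      ring
  have hfac : ∀ k : ℕ, (1 : ℝ) + (n : ℝ) ^ 2 * s ^ 2 / (4 * (2 * (k : ℝ)) ^ 2)
      = 1 + x ^ 2 / (k : ℝ) ^ 2 := by
    intro k
    rw [hxdef]
    rcases Nat.eq_zero_or_pos k with rfl | hk
    · norm_num
    · have hk0 : (0:ℝ) < (k:ℝ) := by exact_mod_cast hk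
      field_simp
      linear_combination (-(4*(n:ℝ)^2)) * (sq_abs s)
  constructor
  · have hAnn : 0 ≤ x * (Real.cosh (π * x) / Real.sinh (π * x)) := by
      have := Real.sinh_pos_iff.2 (mul_pos Real.pi_pos hx)
      have := Real.cosh_pos (π * x)
      positivity
    rw [hA_eq, hcosh_eq]
    rw [Finset.prod_congr rfl fun k _ => by rw [hfac k]]
    rw [sqrt_finset_prod _ _ (fun k _ => by positivity)]
    rw [← Real.sqrt_mul Real.pi_pos.le, ← Real.sqrt_mul (by positivity)]
    exact Real.sqrt_le_sqrt (key_ineq x hx _)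
  · have h1 : Real.cosh (π * s * n / 4) ≤ Real.exp (π * x) := by
      rw [hcosh_eq, ← Real.cosh_abs]
      have : |π * x| = π * x := abs_of_pos (mul_pos Real.pi_pos hx)
      rw [this] at *
      calc Real.cosh (π * x) ≤ Real.exp |π * x| := cosh_le_exp_abs _
        _ = Real.exp (π * x) := by rw [abs_of_pos (mul_pos Real.pi_pos hx)]
    calc Real.sqrt (Real.cosh (π * s * n / 4)) ≤ Real.sqrt (Real.exp (π * x)) :=
          Real.sqrt_le_sqrt h1
      _ = Real.exp (π * x / 2) := by
          rw [show Real.exp (π * x) = Real.exp (π * x / 2) * Real.exp (π * x / 2) by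
              rw [← Real.exp_add]; ring_nf,
            Real.sqrt_mul_self (Real.exp_pos _).le]
      _ = Real.exp (π * |s| * n / 8) := by rw [hxdef]; ring_nf
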